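/- arXiv:1811.11031 — 2 statements merged into one kernel-verified Lean document; each statement's English description precedes it below -/
import Mathlib

section
/- Fix an integer n ≥ 1 and real numbers y₁, …, yₙ all strictly positive. Then the skew-normal score function U(θ) = Σᵢ (φ(θyᵢ)/Φ(θyᵢ))·yᵢ satisfies U(θ) > 0 for all θ ∈ ℝ; consequently the log-likelihood ℓ(θ) = Σᵢ log(2·φ(yᵢ)·Φ(θ yᵢ)) is strictly increasing on ℝ, U has no zero, and the maximum likelihood estimate does not exist (is infinite). -/
open Real

/-- If all observations `yᵢ` are strictly positive, the skew-normal score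
`U(θ) = Σᵢ (φ(θyᵢ)/Φ(θyᵢ)) yᵢ` is strictly positive everywhere; consequently the
log-likelihood `ℓ(θ) = Σᵢ log(2 φ(yᵢ) Φ(θ yᵢ))` is strictly increasing, `U` has no
zero, and the MLE does not exist (no finite maximizer). -/
theorem skewNormal_mle_infinite
    (n : ℕ) (hn : 1 ≤ n) (y : Fin n → ℝ) (hy : ∀ i, 0 < y i)
    (φ Φ : ℝ → ℝ)
    (hφ : ∀ x, φ x = (Real.sqrt (2 * π))⁻¹ * Real.exp (-x ^ 2 / 2))
    (hΦ : ∀ x, Φ x = ∫ t in Set.Iic x, φ t)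
    (ℓ U : ℝ → ℝ)
    (hℓ : ∀ θ, ℓ θ = ∑ i, Real.log (2 * φ (y i) * Φ (θ * y i)))
    (hU : ∀ θ, U θ = ∑ i, (φ (θ * y i) / Φ (θ * y i)) * y i) :
    (∀ θ, 0 < U θ) ∧ StrictMono ℓ ∧ (∀ θ, U θ ≠ 0) ∧
    ¬∃ θ : ℝ, ∀ θ' : ℝ, ℓ θ' ≤ ℓ θ := by
  have hsq : (0:ℝ) < Real.sqrt (2 * π) := Real.sqrt_pos.2 (by positivity)
  have hφpos : ∀ x, 0 < φ x := by
    intro x; rw [hφ]; positivity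
  have heq : φ = fun x => (Real.sqrt (2 * π))⁻¹ * Real.exp (-(1/2) * x ^ 2) := by
    funext x; rw [hφ]; congr 1; ring
  have hint : MeasureTheory.Integrable φ := by
    rw [heq]
    exact (integrable_exp_neg_mul_sq (by norm_num : (0:ℝ) < 1/2)).const_mul _
  have hΦnonneg : ∀ x, 0 ≤ Φ x := by
    intro x; rw [hΦ]
    exact MeasureTheory.setIntegral_nonneg measurableSet_Iic
      (fun t _ => (hφpos t).le)
  have hsplit : ∀ a b : ℝ, a < b → Φ b = Φ a + ∫ t in Set.Ioc a b, φ t := by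
    intro a b hab
    rw [hΦ, hΦ, ← MeasureTheory.setIntegral_union (Set.Iic_disjoint_Ioc le_rfl)
      measurableSet_Ioc (hint.integrableOn) (hint.integrableOn),
      Set.Iic_union_Ioc_eq_Iic hab.le]
  have hIocpos : ∀ a b : ℝ, a < b → 0 < ∫ t in Set.Ioc a b, φ t := by
    intro a b hab
    rw [← intervalIntegral.integral_of_le hab.le]
    exact intervalIntegral.intervalIntegral_pos_of_pos
      hint.intervalIntegrable hφpos hab
  have hΦmono : StrictMono Φ := by
    intro a b hab
    rw [hsplit a b hab]
    linarith [hIocpos a b hab]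
  have hΦpos : ∀ x, 0 < Φ x := by
    intro x
    have := hsplit (x - 1) x (by linarith)
    have h2 := hIocpos (x - 1) x (by linarith)
    have h3 := hΦnonneg (x - 1)
    linarith
  have hUpos : ∀ θ, 0 < U θ := by
    intro θ
    rw [hU]
    apply Finset.sum_pos
    · intro i _
      exact mul_pos (div_pos (hφpos _) (hΦpos _)) (hy i)
    · have : Nonempty (Fin n) := Fin.pos_iff_nonempty.1 hn
      exact Finset.univ_nonempty
  have hℓmono : StrictMono ℓ := by
    intro a b hab
    rw [hℓ, hℓ]
    have : Nonempty (Fin n) := Fin.pos_iff_nonempty.1 hn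
    apply Finset.sum_lt_sum_of_nonempty Finset.univ_nonempty
    intro i _
    apply Real.log_lt_log
    · exact mul_pos (mul_pos two_pos (hφpos _)) (hΦpos _)
    · have := hΦmono (mul_lt_mul_of_pos_right hab (hy i))
      have h2 : 0 < 2 * φ (y i) := mul_pos two_pos (hφpos _)
      nlinarith
  refine ⟨hUpos, hℓmono, fun θ => (hUpos θ).ne', ?_⟩
  rintro ⟨θ, hθ⟩
  exact absurd (hθ (θ + 1)) (not_le.2 (hℓmono (by linarith)))
end

section
/- Fix k > 0 and λ > 0, and let γ be the gamma distribution with shape k and rate λ. Then Cov(Y, log Y) = ∫ y·log y dγ − (∫ y dγ)·(∫ log y dγ) = 1/λ = Var(Y)/E(Y). Consequently, for the gamma distribution with mean μ and precision φ (shape φ, rate φ/μ), the parameters μ and φ are orthogonal: E[U_μ·U_φ] = ∫ (φ/μ²)(y−μ)·(−ψ(φ) + 1 + log(μ/φ) + log y − y/μ) dγ(y) = 0. -/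
open MeasureTheory ProbabilityTheory Real

namespace GammaOrtho

open scoped ENNReal NNReal
open MeasureTheory Real Set Filter Topology ProbabilityTheory

lemma abs_log_le {eps t : ℝ} (he : 0 < eps) (ht : 0 < t) :
    |log t| ≤ (t ^ eps + t ^ (-eps)) / eps := by
  have key : ∀ s : ℝ, 0 < s → log s ≤ s ^ eps / eps := by
    intro s hs
    rw [le_div_iff₀ he]
    have h1 : log (s ^ eps) ≤ s ^ eps - 1 := by
      have := log_le_sub_one_of_pos (rpow_pos_of_pos hs eps)
      linarith
    rw [log_rpow hs, mul_comm] at h1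
    nlinarith [rpow_pos_of_pos hs eps]
  rcases le_total 1 t with h | h
  · rw [abs_of_nonneg (log_nonneg h)]
    have h1 := key t ht
    have h2 : 0 < t ^ (-eps) := rpow_pos_of_pos ht _
    have h3 : t ^ eps / eps ≤ (t ^ eps + t ^ (-eps)) / eps := by
      gcongr; linarith
    linarith
  · rw [abs_of_nonpos (log_nonpos ht.le h)]
    have h1 := key t⁻¹ (inv_pos.mpr ht)
    rw [log_inv, inv_rpow ht.le, ← rpow_neg ht.le] at h1
    have h2 : 0 < t ^ eps := rpow_pos_of_pos ht _
    have h3 : t ^ (-eps) / eps ≤ (t ^ eps + t ^ (-eps)) / eps := by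
      gcongr; linarith
    linarith

lemma int_pow {l : ℝ} (hl : 0 < l) {a : ℝ} (ha : -1 < a) :
    IntegrableOn (fun t => t ^ a * exp (-(l * t))) (Ioi 0) := by
  have := integrableOn_rpow_mul_exp_neg_mul_rpow ha zero_lt_one hl
  simpa [rpow_one, neg_mul] using this

lemma int_pow_log {l : ℝ} (hl : 0 < l) {a : ℝ} (ha : -1 < a) :
    IntegrableOn (fun t => t ^ a * log t * exp (-(l * t))) (Ioi 0) := by
  set eps := (a + 1) / 2 with heps
  have he : 0 < eps := by simp [heps]; linarith
  have h1 : -1 < a + eps := by linarith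
  have h2 : -1 < a - eps := by simp [heps]; linarith
  have hg : IntegrableOn
      (fun t => (t ^ (a + eps) * exp (-(l * t)) + t ^ (a - eps) * exp (-(l * t))) / eps)
      (Ioi 0) := ((int_pow hl h1).add (int_pow hl h2)).div_const _
  refine Integrable.mono' hg ?_ ?_
  · apply Measurable.aestronglyMeasurable
    exact (((measurable_id'.pow_const _).mul (Real.measurable_log)).mul
      ((measurable_const.mul measurable_id).neg.exp))
  · rw [ae_restrict_iff' measurableSet_Ioi]
    filter_upwards with t ht
    have ht : (0:ℝ) < t := ht
    have hb := abs_log_le he ht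
    have hpa : (0:ℝ) < t ^ a := rpow_pos_of_pos ht _
    have hexp : (0:ℝ) < exp (-(l * t)) := exp_pos _
    rw [norm_eq_abs, abs_mul, abs_mul, abs_of_pos hpa, abs_of_pos hexp]
    have step : t ^ a * |log t| ≤ t ^ a * ((t ^ eps + t ^ (-eps)) / eps) := by
      exact mul_le_mul_of_nonneg_left hb hpa.le
    have expand : t ^ a * ((t ^ eps + t ^ (-eps)) / eps) * exp (-(l * t))
        = (t ^ (a + eps) * exp (-(l * t)) + t ^ (a - eps) * exp (-(l * t))) / eps := by
      have e1 : t ^ (a+eps) = t ^ a * t ^ eps := rpow_add ht a eps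
      have e2 : t ^ (a-eps) = t ^ a * t ^ (-eps) := by
        rw [rpow_sub ht, rpow_neg ht.le, div_eq_mul_inv]
      rw [e1, e2]; ring
    calc t ^ a * |log t| * exp (-(l * t))
        ≤ t ^ a * ((t ^ eps + t ^ (-eps)) / eps) * exp (-(l * t)) := by
          exact mul_le_mul_of_nonneg_right step hexp.le
      _ = _ := expand

lemma ibp {k l : ℝ} (hk : 0 < k) (hl : 0 < l) :
    k * (∫ t in Ioi 0, t ^ (k-1) * log t * exp (-(l * t)))
      - l * (∫ t in Ioi 0, t ^ k * log t * exp (-(l * t)))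
      + (1/l) ^ k * Gamma k = 0 := by
  set F : ℝ → ℝ := fun y => y ^ k * exp (-(l * y)) * log y with hF
  set f' : ℝ → ℝ := fun x =>
    (k * (x ^ (k-1) * log x * exp (-(l * x))) - l * (x ^ k * log x * exp (-(l * x))))
      + x ^ (k-1) * exp (-(l * x)) with hf'
  have hF0 : F 0 = 0 := by simp [hF]
  have hderiv : ∀ x ∈ Ioi (0:ℝ), HasDerivAt F (f' x) x := by
    intro x hx
    have hx : (0:ℝ) < x := hx
    have h1 : HasDerivAt (fun y : ℝ => y ^ k) (k * x ^ (k-1)) x :=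
      Real.hasDerivAt_rpow_const (Or.inl hx.ne')
    have h2 : HasDerivAt (fun y : ℝ => exp (-(l * y))) (exp (-(l * x)) * -(l * 1)) x :=
      (((hasDerivAt_id x).const_mul l).neg).exp
    have h3 : HasDerivAt Real.log x⁻¹ x := Real.hasDerivAt_log hx.ne'
    have H := (h1.mul h2).mul h3
    have hxk : x ^ k * x⁻¹ = x ^ (k-1) := by
      rw [rpow_sub hx, rpow_one, div_eq_mul_inv]
    convert H using 1
    · rfl
    · rfl
    · rfl
    rw [hf']
    simp only
    rw [← hxk]
    simp only [Pi.mul_apply]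
    ring
  have f'int : IntegrableOn f' (Ioi 0) := by
    refine Integrable.add (Integrable.sub ?_ ?_) ?_
    · exact (int_pow_log hl (by linarith : (-1:ℝ) < k-1)).const_mul k
    · exact (int_pow_log hl (by linarith : (-1:ℝ) < k)).const_mul l
    · exact int_pow hl (by linarith : (-1:ℝ) < k-1)
  have hcont : ContinuousWithinAt F (Ici 0) 0 := by
    have hIoi : Tendsto F (𝓝[>] (0:ℝ)) (𝓝 0) := by
      have t1 : Tendsto (fun y : ℝ => log y * y ^ k) (𝓝[>] (0:ℝ)) (𝓝 0) :=
        tendsto_log_mul_rpow_nhdsGT_zero hk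
      have t2 : Tendsto (fun y : ℝ => exp (-(l * y))) (𝓝[>] (0:ℝ)) (𝓝 1) := by
        have : Tendsto (fun y : ℝ => exp (-(l * y))) (𝓝 (0:ℝ)) (𝓝 (exp (-(l * 0)))) :=
          (Real.continuous_exp.comp ((continuous_const.mul continuous_id).neg)).tendsto 0
        simpa using this.mono_left nhdsWithin_le_nhds
      have := t1.mul t2
      rw [zero_mul] at this
      refine this.congr fun y => by rw [hF]; ring
    unfold ContinuousWithinAt
    rw [hF0, ← Set.Ioi_insert, nhdsWithin_insert, tendsto_sup]
    exact ⟨by simpa [hF0] using tendsto_pure_nhds F 0, hIoi⟩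
  have hTop : Tendsto F atTop (𝓝 0) := by
    apply squeeze_zero_norm' (a := fun y => y ^ (k+1) * exp (-(l * y)))
    · filter_upwards [eventually_ge_atTop (1:ℝ)] with y hy
      have hy0 : (0:ℝ) < y := by linarith
      have hlog : |log y| ≤ y := by
        rw [abs_of_nonneg (log_nonneg hy)]
        linarith [log_le_sub_one_of_pos hy0]
      have : ‖F y‖ = y ^ k * exp (-(l * y)) * |log y| := by
        rw [hF]; simp only [norm_eq_abs, abs_mul]
        rw [abs_of_nonneg (rpow_pos_of_pos hy0 k).le, abs_of_nonneg (exp_pos _).le]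
      rw [this, rpow_add_one hy0.ne' k]
      calc y ^ k * exp (-(l * y)) * |log y| ≤ y ^ k * exp (-(l * y)) * y := by
            exact mul_le_mul_of_nonneg_left hlog (by positivity)
        _ = y ^ k * y * exp (-(l * y)) := by ring
    · have := tendsto_rpow_mul_exp_neg_mul_atTop_nhds_zero (k+1) l hl
      simpa [neg_mul] using this
  have key := integral_Ioi_of_hasDerivAt_of_tendsto hcont hderiv f'int hTop
  rw [hF0, sub_zero] at key
  have expand : ∫ x in Ioi 0, f' x =
      (k * (∫ t in Ioi 0, t ^ (k-1) * log t * exp (-(l * t)))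
        - l * (∫ t in Ioi 0, t ^ k * log t * exp (-(l * t))))
      + ∫ t in Ioi 0, t ^ (k-1) * exp (-(l * t)) := by
    simp only [hf']
    have hA : Integrable (fun x => k * (x ^ (k-1) * log x * exp (-(l * x))))
        (volume.restrict (Ioi 0)) :=
      (int_pow_log hl (by linarith : (-1:ℝ) < k-1)).const_mul k
    have hB : Integrable (fun x => l * (x ^ k * log x * exp (-(l * x))))
        (volume.restrict (Ioi 0)) :=
      (int_pow_log hl (by linarith : (-1:ℝ) < k)).const_mul l
    have hC : Integrable (fun x : ℝ => x ^ (k-1) * exp (-(l * x)))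
        (volume.restrict (Ioi 0)) := int_pow hl (by linarith : (-1:ℝ) < k-1)
    have hAB : Integrable (fun x => k * (x ^ (k-1) * log x * exp (-(l * x)))
        - l * (x ^ k * log x * exp (-(l * x)))) (volume.restrict (Ioi 0)) := hA.sub hB
    rw [integral_add hAB hC, integral_sub hA hB, MeasureTheory.integral_const_mul, MeasureTheory.integral_const_mul]
  have hG : (∫ t in Ioi 0, t ^ (k-1) * exp (-(l * t))) = (1/l) ^ k * Gamma k :=
    integral_rpow_mul_exp_neg_mul_Ioi hk hl
  rw [expand, hG] at key
  linarith

lemma pdf_toReal {k l : ℝ} (hk : 0 < k) (hl : 0 < l) (x : ℝ) :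
    (gammaPDF k l x).toReal = gammaPDFReal k l x := by
  rw [gammaPDF, ENNReal.toReal_ofReal (gammaPDFReal_nonneg hk hl x)]

lemma gamma_int {k l : ℝ} (hk : 0 < k) (hl : 0 < l) (f : ℝ → ℝ) :
    ∫ y, f y ∂(gammaMeasure k l)
      = ∫ y in Ioi 0, (l ^ k / Gamma k) * (y ^ (k-1) * exp (-(l * y)) * f y) := by
  rw [gammaMeasure]
  have hmeas : Measurable fun x => (gammaPDFReal k l x).toNNReal :=
    (measurable_gammaPDFReal k l).real_toNNReal
  have hpdf : gammaPDF k l = fun x => ((gammaPDFReal k l x).toNNReal : ℝ≥0∞) := rfl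
  rw [hpdf, integral_withDensity_eq_integral_smul hmeas]
  have h1 : ∀ x : ℝ, (gammaPDFReal k l x).toNNReal • f x = gammaPDFReal k l x * f x := by
    intro x
    rw [NNReal.smul_def, smul_eq_mul, Real.coe_toNNReal _ (gammaPDFReal_nonneg hk hl x)]
  simp_rw [h1]
  rw [← setIntegral_eq_integral_of_forall_compl_eq_zero
      (s := Ici 0) (f := fun x => gammaPDFReal k l x * f x)
      (fun x hx => by
        simp only [gammaPDFReal]
        rw [if_neg (by simpa using hx), zero_mul]),
    integral_Ici_eq_integral_Ioi]
  refine setIntegral_congr_fun measurableSet_Ioi fun y hy => ?_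
  have hy : (0:ℝ) < y := hy
  simp only [gammaPDFReal]
  rw [if_pos hy.le]
  ring

lemma gamma_integrable {k l : ℝ} (hk : 0 < k) (hl : 0 < l) {f : ℝ → ℝ} (hm : Measurable f)
    (h : IntegrableOn (fun y => f y * (y ^ (k-1) * exp (-(l * y)))) (Ioi 0)) :
    Integrable f (gammaMeasure k l) := by
  have hpdf : gammaPDF k l = fun x => ENNReal.ofReal (gammaPDFReal k l x) := rfl
  rw [gammaMeasure, hpdf, integrable_withDensity_iff
    ((measurable_gammaPDFReal k l).ennreal_ofReal)
    (ae_of_all _ fun x => ENNReal.ofReal_lt_top)]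
  simp only [ENNReal.toReal_ofReal (gammaPDFReal_nonneg hk hl _)]
  have heq : (fun x => f x * gammaPDFReal k l x)
      = (Ici (0:ℝ)).indicator (fun x => f x * gammaPDFReal k l x) := by
    funext x
    rcases le_or_gt 0 x with hx | hx
    · rw [Set.indicator_of_mem (mem_Ici.mpr hx)]
    · rw [Set.indicator_of_notMem (by simpa using hx)]
      simp only [gammaPDFReal]
      rw [if_neg (not_le.mpr hx), mul_zero]
  rw [heq, integrable_indicator_iff measurableSet_Ici, integrableOn_Ici_iff_integrableOn_Ioi]
  refine (h.const_mul (l ^ k / Gamma k)).congr ?_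
  rw [EventuallyEq, ae_restrict_iff' measurableSet_Ioi]
  filter_upwards with x hx
  have hx : (0:ℝ) < x := hx
  simp only [gammaPDFReal]
  rw [if_pos hx.le]
  ring

lemma master {k l : ℝ} (hk : 0 < k) (hl : 0 < l) (f : ℝ → ℝ) (a1 a2 a3 b1 b2 : ℝ)
    (hf : ∀ y : ℝ, 0 < y → f y = a1 + a2 * y + a3 * y^2 + b1 * log y + b2 * (y * log y)) :
    ∫ y, f y ∂(gammaMeasure k l)
      = a1 + a2 * (k/l) + a3 * (k*(k+1)/l^2)
        + b1 * ((l^k/Gamma k) * ∫ t in Ioi 0, t ^ (k-1) * log t * exp (-(l*t)))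
        + b2 * ((k/l) * ((l^k/Gamma k) * ∫ t in Ioi 0, t ^ (k-1) * log t * exp (-(l*t))) + 1/l) := by
  have hG : 0 < Gamma k := Gamma_pos_of_pos hk
  have hA : (0:ℝ) < l ^ k := rpow_pos_of_pos hl _
  have hu : l ^ k * (1/l) ^ k = 1 := by
    rw [one_div, ← Real.mul_rpow hl.le (inv_nonneg.mpr hl.le), mul_inv_cancel₀ hl.ne',
      Real.one_rpow]
  -- canonical integrands
  set e : ℝ → ℝ := fun t => exp (-(l * t)) with he
  have hI1 : IntegrableOn (fun t : ℝ => a1 * (t ^ (k-1) * e t)) (Ioi 0) :=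
    (int_pow hl (by linarith : (-1:ℝ) < k-1)).const_mul a1
  have hI2 : IntegrableOn (fun t : ℝ => a2 * (t ^ k * e t)) (Ioi 0) :=
    (int_pow hl (by linarith : (-1:ℝ) < k)).const_mul a2
  have hI3 : IntegrableOn (fun t : ℝ => a3 * (t ^ (k+1) * e t)) (Ioi 0) :=
    (int_pow hl (by linarith : (-1:ℝ) < k+1)).const_mul a3
  have hI4 : IntegrableOn (fun t : ℝ => b1 * (t ^ (k-1) * log t * e t)) (Ioi 0) :=
    (int_pow_log hl (by linarith : (-1:ℝ) < k-1)).const_mul b1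
  have hI5 : IntegrableOn (fun t : ℝ => b2 * (t ^ k * log t * e t)) (Ioi 0) :=
    (int_pow_log hl (by linarith : (-1:ℝ) < k)).const_mul b2
  rw [gamma_int hk hl, MeasureTheory.integral_const_mul]
  have hcongr : ∫ y in Ioi 0, y ^ (k-1) * exp (-(l * y)) * f y
      = ∫ t in Ioi 0, (a1 * (t ^ (k-1) * e t) + a2 * (t ^ k * e t) + a3 * (t ^ (k+1) * e t)
          + b1 * (t ^ (k-1) * log t * e t) + b2 * (t ^ k * log t * e t)) := by
    refine setIntegral_congr_fun measurableSet_Ioi fun t ht => ?_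
    have ht : (0:ℝ) < t := ht
    have e1 : t ^ k = t ^ (k-1) * t := by
      rw [← rpow_add_one ht.ne' (k-1), sub_add_cancel]
    have e2 : t ^ (k+1) = t ^ (k-1) * t^2 := by
      rw [rpow_add_one ht.ne' k, e1]; ring
    rw [hf t ht, he]
    simp only
    rw [e1, e2]
    ring
  have s2 : IntegrableOn (fun t : ℝ => a1 * (t ^ (k-1) * e t) + a2 * (t ^ k * e t))
      (Ioi 0) := hI1.add hI2
  have s3 : IntegrableOn (fun t : ℝ => a1 * (t ^ (k-1) * e t) + a2 * (t ^ k * e t)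
      + a3 * (t ^ (k+1) * e t)) (Ioi 0) := s2.add hI3
  have s4 : IntegrableOn (fun t : ℝ => a1 * (t ^ (k-1) * e t) + a2 * (t ^ k * e t)
      + a3 * (t ^ (k+1) * e t) + b1 * (t ^ (k-1) * log t * e t)) (Ioi 0) := s3.add hI4
  rw [hcongr, integral_add s4 hI5,
    integral_add s3 hI4, integral_add s2 hI3,
    integral_add hI1 hI2, MeasureTheory.integral_const_mul, MeasureTheory.integral_const_mul,
    MeasureTheory.integral_const_mul, MeasureTheory.integral_const_mul,
    MeasureTheory.integral_const_mul]
  -- closed forms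
  have hP0 : ∫ t in Ioi 0, t ^ (k-1) * e t = (1/l) ^ k * Gamma k :=
    integral_rpow_mul_exp_neg_mul_Ioi hk hl
  have hP1 : ∫ t in Ioi 0, t ^ k * e t = (1/l) ^ k * (1/l) * (k * Gamma k) := by
    have h := integral_rpow_mul_exp_neg_mul_Ioi (show (0:ℝ) < k+1 by linarith) hl
    rw [show k+1-1 = k from by ring] at h
    rw [he]; simp only
    rw [h, rpow_add_one (one_div_ne_zero hl.ne') k, Gamma_add_one hk.ne']
  have hP2 : ∫ t in Ioi 0, t ^ (k+1) * e t
      = (1/l) ^ k * (1/l) * (1/l) * ((k+1) * (k * Gamma k)) := by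
    have h := integral_rpow_mul_exp_neg_mul_Ioi (show (0:ℝ) < k+2 by linarith) hl
    rw [show k+2-1 = k+1 from by ring] at h
    rw [he]; simp only
    rw [h, show k+(2:ℝ) = (k+1)+1 from by ring, rpow_add_one (one_div_ne_zero hl.ne') (k+1),
      rpow_add_one (one_div_ne_zero hl.ne') k, Gamma_add_one (by positivity : k+1 ≠ 0),
      Gamma_add_one hk.ne']
  -- relation between the two log integrals
  have hJ : ∫ t in Ioi 0, t ^ k * log t * e t
      = (k * (∫ t in Ioi 0, t ^ (k-1) * log t * e t) + (1/l) ^ k * Gamma k) / l := by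
    have h := ibp hk hl
    rw [he]; simp only
    field_simp
    linarith
  rw [hP0, hP1, hP2, hJ]
  have hu' : (1/l) ^ k = (l ^ k)⁻¹ := by
    field_simp
    linarith [hu]
  rw [hu']
  set J := ∫ t in Ioi 0, t ^ (k-1) * log t * e t
  field_simp

end GammaOrtho

open GammaOrtho Set

/-- For the gamma distribution with shape `k` and rate `λ`,
`Cov(Y, log Y) = 1/λ = Var(Y)/E(Y)`. Consequently, for the gamma distribution with
mean `μ` and precision `φ` (shape `φ`, rate `φ/μ`), the parameters `μ` and `φ` are
orthogonal: the expectation of the product of the two scores vanishes. -/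
theorem gamma_orthogonality
    (ψ : ℝ → ℝ) (hψ : ∀ x, ψ x = deriv (fun s => Real.log (Real.Gamma s)) x) :
    (∀ k l : ℝ, 0 < k → 0 < l →
      (∫ y, y * Real.log y ∂(gammaMeasure k l))
          - (∫ y, y ∂(gammaMeasure k l)) * (∫ y, Real.log y ∂(gammaMeasure k l))
        = 1 / l ∧
      (1 : ℝ) / l =
        (∫ y, (y - ∫ z, z ∂(gammaMeasure k l)) ^ 2 ∂(gammaMeasure k l))
          / (∫ y, y ∂(gammaMeasure k l))) ∧
    (∀ m p : ℝ, 0 < m → 0 < p →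
      (∫ y, ((p / m ^ 2) * (y - m))
            * (-ψ p + 1 + Real.log (m / p) + Real.log y - y / m)
          ∂(gammaMeasure p (p / m))) = 0) := by
  constructor
  · intro k l hk hl
    have h1 : (∫ y, y ∂(gammaMeasure k l)) = k/l := by
      have := master hk hl (fun y => y) 0 1 0 0 0 (fun y _ => by ring)
      simpa using this
    have h2 : (∫ y, Real.log y ∂(gammaMeasure k l))
        = (l^k/Gamma k) * ∫ t in Ioi 0, t ^ (k-1) * log t * exp (-(l*t)) := by
      have := master hk hl (fun y => Real.log y) 0 0 0 1 0 (fun y _ => by ring)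
      simpa using this
    have h3 : (∫ y, y * Real.log y ∂(gammaMeasure k l))
        = (k/l) * ((l^k/Gamma k) * ∫ t in Ioi 0, t ^ (k-1) * log t * exp (-(l*t))) + 1/l := by
      have := master hk hl (fun y => y * Real.log y) 0 0 0 0 1 (fun y _ => by ring)
      simpa using this
    have h4 : (∫ y, (y - k/l)^2 ∂(gammaMeasure k l)) = k/l^2 := by
      have := master hk hl (fun y => (y - k/l)^2) ((k/l)^2) (-2*(k/l)) 1 0 0
        (fun y _ => by ring)
      rw [this]
      field_simp
      ring
    refine ⟨by rw [h1, h2, h3]; ring, ?_⟩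
    rw [h1, h4]
    field_simp
  · intro m p hm hp
    have hlp : 0 < p / m := div_pos hp hm
    have key := master hp hlp
      (fun y => ((p / m ^ 2) * (y - m))
        * (-ψ p + 1 + Real.log (m / p) + Real.log y - y / m))
      ((p/m^2) * (-m * (-ψ p + 1 + Real.log (m / p))))
      ((p/m^2) * ((-ψ p + 1 + Real.log (m / p)) + 1))
      ((p/m^2) * (-1/m))
      ((p/m^2) * (-m))
      (p/m^2)
      (fun y _ => by field_simp; ring)
    rw [key]
    set L := (p/m)^p / Gamma p * ∫ t in Ioi 0, t ^ (p-1) * log t * exp (-(p/m*t)) with hL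
    field_simp
    ring
end
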